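/- arXiv:2405.02635 — 3 statements merged into one kernel-verified Lean document; each statement's English description precedes it below -/
import Mathlib

section
/- Let (X,d) be a metric space, A, B nonempty subsets of X, and T : A → B a proximal contraction with constant k ∈ [0,1) such that A₀ ≠ ∅, T(A₀) ⊆ B₀, A is proximally complete (every T-proximal Cauchy sequence in A converges in A), and T is proximally continuous (for every T-proximal sequence (xₙ) converging to x ∈ A, T xₙ → T x). Then T has a unique best proximity point x̄ ∈ A, i.e., d(x̄, T x̄) = dist(A,B), and every T-proximal sequence starting at a point of A₀ converges to x̄. -/
open Metric Filter Topology

noncomputable def setDist {X : Type*} [MetricSpace X] (A B : Set X) : ℝ :=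
  sInf (Set.image2 dist A B)

theorem statement10 {X : Type*} [MetricSpace X] (A B : Set X)
    (hA : A.Nonempty) (hB : B.Nonempty) (T : X → X) (hT : Set.MapsTo T A B)
    (k : ℝ) (hk0 : 0 ≤ k) (hk1 : k < 1)
    (hcontr : ∀ x ∈ A, ∀ y ∈ A, ∀ u ∈ A, ∀ v ∈ A,
      dist u (T x) = setDist A B → dist v (T y) = setDist A B →
      dist u v ≤ k * dist x y)
    (hA0 : {a ∈ A | ∃ b ∈ B, dist a b = setDist A B}.Nonempty)
    (hTA0 : Set.MapsTo T {a ∈ A | ∃ b ∈ B, dist a b = setDist A B}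
      {b ∈ B | ∃ a ∈ A, dist a b = setDist A B})
    (hcomplete : ∀ x : ℕ → X, (∀ n, x n ∈ A) →
      (∀ n, dist (x (n + 1)) (T (x n)) = setDist A B) → CauchySeq x →
      ∃ l ∈ A, Tendsto x atTop (𝓝 l))
    (hcont : ∀ (x : ℕ → X), (∀ n, x n ∈ A) →
      (∀ n, dist (x (n + 1)) (T (x n)) = setDist A B) →
      ∀ l ∈ A, Tendsto x atTop (𝓝 l) → Tendsto (fun n => T (x n)) atTop (𝓝 (T l))) :
    ∃ p ∈ A, dist p (T p) = setDist A B ∧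
      (∀ q ∈ A, dist q (T q) = setDist A B → q = p) ∧
      (∀ x : ℕ → X, (∀ n, x n ∈ A) →
        x 0 ∈ {a ∈ A | ∃ b ∈ B, dist a b = setDist A B} →
        (∀ n, dist (x (n + 1)) (T (x n)) = setDist A B) →
        Tendsto x atTop (𝓝 p)) := by
  set c := setDist A B with hc
  -- step: from any point of A₀ we can proximally move to another point of A₀
  have step : ∀ a, a ∈ {a ∈ A | ∃ b ∈ B, dist a b = c} →
      ∃ a', (a' ∈ {a ∈ A | ∃ b ∈ B, dist a b = c}) ∧ dist a' (T a) = c := by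
    intro a ha
    obtain ⟨hTB, a', ha'A, hd⟩ := hTA0 ha
    exact ⟨a', ⟨ha'A, T a, hTB, hd⟩, hd⟩
  choose f hf1 hf2 using step
  obtain ⟨a0, ha0⟩ := hA0
  -- build the iterated proximal sequence
  let seq : ℕ → {a : X // a ∈ {a ∈ A | ∃ b ∈ B, dist a b = c}} := fun n =>
    Nat.rec ⟨a0, ha0⟩ (fun _ s => ⟨f s.1 s.2, hf1 s.1 s.2⟩) n
  set x : ℕ → X := fun n => (seq n).1 with hx
  have hxA : ∀ n, x n ∈ A := fun n => (seq n).2.1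
  have hxprox : ∀ n, dist (x (n + 1)) (T (x n)) = c := fun n => hf2 (seq n).1 (seq n).2
  -- geometric decay of consecutive distances
  have hgeo : ∀ n, dist (x n) (x (n + 1)) ≤ dist (x 0) (x 1) * k ^ n := by
    intro n
    induction n with
    | zero => simp
    | succ n ih =>
      have h := hcontr (x n) (hxA n) (x (n + 1)) (hxA (n + 1)) (x (n + 1)) (hxA (n + 1))
        (x (n + 2)) (hxA (n + 2)) (hxprox n) (hxprox (n + 1))
      calc dist (x (n + 1)) (x (n + 2)) ≤ k * dist (x n) (x (n + 1)) := h
        _ ≤ k * (dist (x 0) (x 1) * k ^ n) := by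
            exact mul_le_mul_of_nonneg_left ih hk0
        _ = dist (x 0) (x 1) * k ^ (n + 1) := by ring
  have hcauchy : CauchySeq x :=
    cauchySeq_of_le_geometric k (dist (x 0) (x 1)) hk1 (fun n => by
      simpa [mul_comm] using hgeo n)
  obtain ⟨p, hpA, hplim⟩ := hcomplete x hxA hxprox hcauchy
  have hTlim := hcont x hxA hxprox p hpA hplim
  -- the limit is a best proximity point
  have hpbest : dist p (T p) = c := by
    have h1 : Tendsto (fun n => x (n + 1)) atTop (𝓝 p) :=
      hplim.comp (tendsto_add_atTop_nat 1)
    have h2 : Tendsto (fun n => dist (x (n + 1)) (T (x n))) atTop (𝓝 (dist p (T p))) :=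
      h1.dist hTlim
    have h3 : Tendsto (fun n : ℕ => dist (x (n + 1)) (T (x n))) atTop (𝓝 c) := by
      simpa [hxprox] using tendsto_const_nhds (α := ℝ) (f := atTop (α := ℕ)) (a := c)
    exact tendsto_nhds_unique h2 h3
  refine ⟨p, hpA, hpbest, ?_, ?_⟩
  · intro q hqA hq
    have h := hcontr q hqA p hpA q hqA p hpA hq hpbest
    have := dist_nonneg (x := q) (y := p)
    have : dist q p = 0 := by nlinarith
    exact dist_eq_zero.mp this
  · intro y hyA hy0 hyprox
    have key : ∀ n, dist (y n) p ≤ dist (y 0) p * k ^ n := by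
      intro n
      induction n with
      | zero => simp
      | succ n ih =>
        have h := hcontr (y n) (hyA n) p hpA (y (n + 1)) (hyA (n + 1)) p hpA
          (hyprox n) hpbest
        calc dist (y (n + 1)) p ≤ k * dist (y n) p := h
          _ ≤ k * (dist (y 0) p * k ^ n) := mul_le_mul_of_nonneg_left ih hk0
          _ = dist (y 0) p * k ^ (n + 1) := by ring
    have hlim0 : Tendsto (fun n => dist (y 0) p * k ^ n) atTop (𝓝 0) := by
      simpa using (tendsto_pow_atTop_nhds_zero_of_lt_one hk0 hk1).const_mul (dist (y 0) p)
    have : Tendsto (fun n => dist (y n) p) atTop (𝓝 0) :=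
      squeeze_zero (fun n => dist_nonneg) key hlim0
    exact tendsto_iff_dist_tendsto_zero.mpr this
end

section
/- Let (X,d) be a metric space, A, B nonempty subsets of X, and T : A → B a proximal contraction with constant k ∈ [0,1) such that A₀ ≠ ∅, T(A₀) ⊆ B₀, A is proximally complete, and A₀ is proximally closed in A (the limit of any convergent T-proximal sequence in A₀ lies in A₀). Then T has a unique best proximity point x̄ ∈ A, and for any x₀ ∈ A₀ every T-proximal sequence starting at x₀ converges to x̄. -/
open Metric Filter Topology

theorem statement11 {X : Type*} [MetricSpace X] (A B : Set X)
    (hA : A.Nonempty) (hB : B.Nonempty) (T : X → X) (hT : Set.MapsTo T A B)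
    (k : ℝ) (hk0 : 0 ≤ k) (hk1 : k < 1)
    (hcontr : ∀ x ∈ A, ∀ y ∈ A, ∀ u ∈ A, ∀ v ∈ A,
      dist u (T x) = setDist A B → dist v (T y) = setDist A B →
      dist u v ≤ k * dist x y)
    (hA0 : {a ∈ A | ∃ b ∈ B, dist a b = setDist A B}.Nonempty)
    (hTA0 : Set.MapsTo T {a ∈ A | ∃ b ∈ B, dist a b = setDist A B}
      {b ∈ B | ∃ a ∈ A, dist a b = setDist A B})
    (hcomplete : ∀ x : ℕ → X, (∀ n, x n ∈ A) →
      (∀ n, dist (x (n + 1)) (T (x n)) = setDist A B) → CauchySeq x →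
      ∃ l ∈ A, Tendsto x atTop (𝓝 l))
    (hclosed : ∀ x : ℕ → X,
      (∀ n, x n ∈ {a ∈ A | ∃ b ∈ B, dist a b = setDist A B}) →
      (∀ n, dist (x (n + 1)) (T (x n)) = setDist A B) →
      ∀ l ∈ A, Tendsto x atTop (𝓝 l) →
      l ∈ {a ∈ A | ∃ b ∈ B, dist a b = setDist A B}) :
    ∃ p ∈ A, dist p (T p) = setDist A B ∧
      (∀ q ∈ A, dist q (T q) = setDist A B → q = p) ∧
      (∀ x : ℕ → X, (∀ n, x n ∈ A) →
        x 0 ∈ {a ∈ A | ∃ b ∈ B, dist a b = setDist A B} →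
        (∀ n, dist (x (n + 1)) (T (x n)) = setDist A B) →
        Tendsto x atTop (𝓝 p)) := by
  classical
  obtain ⟨x0, hx0⟩ := hA0
  have step : ∀ x ∈ {a ∈ A | ∃ b ∈ B, dist a b = setDist A B},
      ∃ y ∈ {a ∈ A | ∃ b ∈ B, dist a b = setDist A B}, dist y (T x) = setDist A B := by
    intro x hx
    obtain ⟨hTb, a, ha, had⟩ := hTA0 hx
    exact ⟨a, ⟨ha, T x, hTb, had⟩, had⟩
  choose! f hfS hfd using step
  set seq : ℕ → X := fun n => f^[n] x0 with hseqdef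
  have hseqS : ∀ n, seq n ∈ {a ∈ A | ∃ b ∈ B, dist a b = setDist A B} := by
    intro n; induction n with
    | zero => exact hx0
    | succ n ih => simpa [hseqdef, Function.iterate_succ_apply'] using hfS _ ih
  have hseqd : ∀ n, dist (seq (n+1)) (T (seq n)) = setDist A B := by
    intro n
    simpa [hseqdef, Function.iterate_succ_apply'] using hfd _ (hseqS n)
  have hseqA : ∀ n, seq n ∈ A := fun n => (hseqS n).1
  have hstep : ∀ n, dist (seq (n+1)) (seq (n+2)) ≤ k * dist (seq n) (seq (n+1)) :=
    fun n => hcontr _ (hseqA n) _ (hseqA (n+1)) _ (hseqA (n+1)) _ (hseqA (n+2))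
      (hseqd n) (hseqd (n+1))
  have hgeo : ∀ n, dist (seq n) (seq (n+1)) ≤ dist (seq 0) (seq 1) * k ^ n := by
    intro n; induction n with
    | zero => simp
    | succ n ih =>
      calc dist (seq (n+1)) (seq (n+2)) ≤ k * dist (seq n) (seq (n+1)) := hstep n
        _ ≤ k * (dist (seq 0) (seq 1) * k ^ n) := by
            exact mul_le_mul_of_nonneg_left ih hk0
        _ = dist (seq 0) (seq 1) * k ^ (n+1) := by ring
  have hcauchy : CauchySeq seq := cauchySeq_of_le_geometric k _ hk1 hgeo
  obtain ⟨l, hlA, hlt⟩ := hcomplete seq hseqA hseqd hcauchy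
  have hlS := hclosed seq hseqS hseqd l hlA hlt
  obtain ⟨hTlB, z, hzA, hzd⟩ := hTA0 hlS
  have hdl : Tendsto (fun n => dist (seq n) l) atTop (𝓝 0) :=
    tendsto_iff_dist_tendsto_zero.mp hlt
  have hzt : Tendsto (fun n => seq (n+1)) atTop (𝓝 z) := by
    rw [tendsto_iff_dist_tendsto_zero]
    refine squeeze_zero (g := fun n => k * dist (seq n) l) (fun n => dist_nonneg) (fun n => ?_) ?_
    · exact hcontr _ (hseqA n) _ hlA _ (hseqA (n+1)) _ hzA (hseqd n) hzd
    · simpa using hdl.const_mul k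
  have hzl : z = l :=
    tendsto_nhds_unique hzt ((tendsto_add_atTop_iff_nat 1).mpr hlt)
  have hlbp : dist l (T l) = setDist A B := hzl ▸ hzd
  refine ⟨l, hlA, hlbp, ?_, ?_⟩
  · intro q hq hqd
    have h := hcontr q hq l hlA q hq l hlA hqd hlbp
    have : dist q l = 0 := by nlinarith [dist_nonneg (x := q) (y := l)]
    exact dist_eq_zero.mp this
  · intro x hxA _ hxd
    have hrec : ∀ n, dist (x (n+1)) l ≤ k * dist (x n) l := fun n =>
      hcontr _ (hxA n) l hlA _ (hxA (n+1)) l hlA (hxd n) hlbp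
    have hbound : ∀ n, dist (x n) l ≤ dist (x 0) l * k ^ n := by
      intro n; induction n with
      | zero => simp
      | succ n ih =>
        calc dist (x (n+1)) l ≤ k * dist (x n) l := hrec n
          _ ≤ k * (dist (x 0) l * k ^ n) := mul_le_mul_of_nonneg_left ih hk0
          _ = dist (x 0) l * k ^ (n+1) := by ring
    rw [tendsto_iff_dist_tendsto_zero]
    refine squeeze_zero (fun n => dist_nonneg) hbound ?_
    simpa using (tendsto_pow_atTop_nhds_zero_of_lt_one hk0 hk1).const_mul (dist (x 0) l)
end

section
/- Let (X,d) be a complete metric space, A, B nonempty closed subsets of X with A₀, B₀ nonempty, T : A → B a proximal contraction with T(A₀) ⊆ B₀, and suppose B is approximatively compact with respect to A. Then T has a unique best proximity point, and for any x₀ ∈ A₀ the sequence defined by d(xₙ₊₁, T xₙ) = dist(A,B) converges to it. (Basha's proximal contraction principle.) -/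
open Metric Filter Topology

theorem statement12 {X : Type*} [MetricSpace X] [CompleteSpace X] (A B : Set X)
    (hA : A.Nonempty) (hB : B.Nonempty) (hAc : IsClosed A) (hBc : IsClosed B)
    (T : X → X) (hT : Set.MapsTo T A B)
    (k : ℝ) (hk0 : 0 ≤ k) (hk1 : k < 1)
    (hcontr : ∀ x ∈ A, ∀ y ∈ A, ∀ u ∈ A, ∀ v ∈ A,
      dist u (T x) = setDist A B → dist v (T y) = setDist A B →
      dist u v ≤ k * dist x y)
    (hA0 : {a ∈ A | ∃ b ∈ B, dist a b = setDist A B}.Nonempty)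
    (hB0 : {b ∈ B | ∃ a ∈ A, dist a b = setDist A B}.Nonempty)
    (hTA0 : Set.MapsTo T {a ∈ A | ∃ b ∈ B, dist a b = setDist A B}
      {b ∈ B | ∃ a ∈ A, dist a b = setDist A B})
    (happrox : ∀ (y : ℕ → X), (∀ n, y n ∈ B) → ∀ x ∈ A,
      Tendsto (fun n => dist x (y n)) atTop (𝓝 (infDist x B)) →
      ∃ z : X, ∃ φ : ℕ → ℕ, StrictMono φ ∧ Tendsto (y ∘ φ) atTop (𝓝 z)) :
    ∃ p ∈ A, dist p (T p) = setDist A B ∧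
      (∀ q ∈ A, dist q (T q) = setDist A B → q = p) ∧
      (∀ x : ℕ → X, (∀ n, x n ∈ A) →
        x 0 ∈ {a ∈ A | ∃ b ∈ B, dist a b = setDist A B} →
        (∀ n, dist (x (n + 1)) (T (x n)) = setDist A B) →
        Tendsto x atTop (𝓝 p)) := by
  set d := setDist A B with hd
  set A0 := {a ∈ A | ∃ b ∈ B, dist a b = d} with hA0def
  -- basic facts about setDist
  have hsd_le : ∀ a ∈ A, ∀ b ∈ B, d ≤ dist a b := by
    intro a ha b hb
    refine csInf_le ⟨0, ?_⟩ (Set.mem_image2_of_mem ha hb)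
    rintro r ⟨a', _, b', _, rfl⟩; exact dist_nonneg
  -- step lemma: from any point of A0 we can move to another point of A0
  have key : ∀ a ∈ A0, ∃ a', a' ∈ A0 ∧ dist a' (T a) = d := by
    intro a ha
    obtain ⟨hTaB, a', ha'A, ha'd⟩ := hTA0 ha
    exact ⟨a', ⟨ha'A, T a, hTaB, ha'd⟩, ha'd⟩
  classical
  -- build the iterative sequence
  let g : X → X := fun a => if h : a ∈ A0 then (key a h).choose else a
  have hg : ∀ a (h : a ∈ A0), g a ∈ A0 ∧ dist (g a) (T a) = d := by
    intro a h
    simp only [g, dif_pos h]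
    exact (key a h).choose_spec
  obtain ⟨x0, hx0⟩ := hA0
  let x : ℕ → X := fun n => g^[n] x0
  have hxA0 : ∀ n, x n ∈ A0 := by
    intro n
    induction n with
    | zero => exact hx0
    | succ n ih =>
      have : x (n+1) = g (x n) := Function.iterate_succ_apply' g n x0
      rw [this]; exact (hg _ ih).1
  have hxA : ∀ n, x n ∈ A := fun n => (hxA0 n).1
  have hxstep : ∀ n, dist (x (n+1)) (T (x n)) = d := by
    intro n
    have : x (n+1) = g (x n) := Function.iterate_succ_apply' g n x0
    rw [this]; exact (hg _ (hxA0 n)).2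
  -- general contraction consequence: any two "proximal successors" contract
  have hcontr' : ∀ n m, dist (x (n+1)) (x (m+1)) ≤ k * dist (x n) (x m) := by
    intro n m
    exact hcontr _ (hxA n) _ (hxA m) _ (hxA (n+1)) _ (hxA (m+1)) (hxstep n) (hxstep m)
  -- geometric bound
  have hgeo : ∀ n, dist (x n) (x (n+1)) ≤ dist (x 0) (x 1) * k ^ n := by
    intro n
    induction n with
    | zero => simp
    | succ n ih =>
      calc dist (x (n+1)) (x (n+2)) ≤ k * dist (x n) (x (n+1)) := hcontr' n (n+1)
        _ ≤ k * (dist (x 0) (x 1) * k ^ n) := by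
            exact mul_le_mul_of_nonneg_left ih hk0
        _ = dist (x 0) (x 1) * k ^ (n+1) := by ring
  have hcauchy : CauchySeq x :=
    cauchySeq_of_le_geometric k (dist (x 0) (x 1)) hk1 hgeo
  obtain ⟨p, hp⟩ := cauchySeq_tendsto_of_complete hcauchy
  have hpA : p ∈ A := hAc.mem_of_tendsto hp (Eventually.of_forall hxA)
  -- dist p (x (n+1)) → 0
  have hdist0 : Tendsto (fun n => dist p (x (n+1))) atTop (𝓝 0) := by
    have h1 : Tendsto (fun n => x (n+1)) atTop (𝓝 p) :=
      hp.comp (tendsto_add_atTop_nat 1)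
    have := tendsto_iff_dist_tendsto_zero.mp h1
    simpa [dist_comm] using this
  -- the key squeeze: dist p (T (x n)) → d, via infDist
  have hle1 : ∀ n, d ≤ dist p (T (x n)) := fun n => hsd_le p hpA _ (hT (hxA n))
  have hle2 : ∀ n, dist p (T (x n)) ≤ dist p (x (n+1)) + d := by
    intro n
    calc dist p (T (x n)) ≤ dist p (x (n+1)) + dist (x (n+1)) (T (x n)) :=
          dist_triangle _ _ _
      _ = dist p (x (n+1)) + d := by rw [hxstep n]
  have htendd : Tendsto (fun n => dist p (T (x n))) atTop (𝓝 d) := by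
    have hub : Tendsto (fun n => dist p (x (n+1)) + d) atTop (𝓝 (0 + d)) :=
      hdist0.add tendsto_const_nhds
    rw [zero_add] at hub
    exact tendsto_of_tendsto_of_tendsto_of_le_of_le tendsto_const_nhds hub hle1 hle2
  have hinf : infDist p B = d := by
    have h1 : d ≤ infDist p B := by
      by_contra h
      push_neg at h
      obtain ⟨b, hb, hlt⟩ := (infDist_lt_iff hB).mp h
      exact absurd (hsd_le p hpA b hb) (not_le.mpr hlt)
    have h2 : infDist p B ≤ d :=
      ge_of_tendsto htendd (Eventually.of_forall fun n =>
        infDist_le_dist_of_mem (hT (hxA n)))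
    linarith
  -- approximative compactness: subsequence of T (x n) converges to z ∈ B
  obtain ⟨z, φ, hφ, hzlim⟩ := happrox (fun n => T (x n)) (fun n => hT (hxA n)) p hpA
    (by rw [hinf]; exact htendd)
  have hzB : z ∈ B := hBc.mem_of_tendsto hzlim (Eventually.of_forall fun n => hT (hxA (φ n)))
  have hpz : dist p z = d := by
    have h1 : Tendsto (fun n => dist p (T (x (φ n)))) atTop (𝓝 (dist p z)) :=
      (Continuous.dist continuous_const continuous_id).continuousAt.tendsto.comp hzlim
    have h2 : Tendsto (fun n => dist p (T (x (φ n)))) atTop (𝓝 d) :=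
      htendd.comp hφ.tendsto_atTop
    exact tendsto_nhds_unique h1 h2
  have hpA0 : p ∈ A0 := ⟨hpA, z, hzB, hpz⟩
  -- p is a best proximity point
  obtain ⟨w, hwA0, hw⟩ := key p hpA0
  have hwA : w ∈ A := hwA0.1
  have hxw : ∀ n, dist (x (n+1)) w ≤ k * dist (x n) p := fun n =>
    hcontr _ (hxA n) _ hpA _ (hxA (n+1)) _ hwA (hxstep n) hw
  have hxtow : Tendsto (fun n => x (n+1)) atTop (𝓝 w) := by
    rw [tendsto_iff_dist_tendsto_zero]
    have hub : Tendsto (fun n => k * dist (x n) p) atTop (𝓝 (k * 0)) := by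
      refine Tendsto.const_mul k ?_
      have := tendsto_iff_dist_tendsto_zero.mp hp
      exact this
    rw [mul_zero] at hub
    exact tendsto_of_tendsto_of_tendsto_of_le_of_le tendsto_const_nhds hub
      (fun n => dist_nonneg) hxw
  have hwp : w = p :=
    tendsto_nhds_unique hxtow (hp.comp (tendsto_add_atTop_nat 1))
  have hbest : dist p (T p) = d := by rw [hwp] at hw; exact hw
  refine ⟨p, hpA, hbest, ?_, ?_⟩
  · -- uniqueness
    intro q hqA hq
    have h := hcontr q hqA p hpA q hqA p hpA hq hbest
    have : dist q p ≤ 0 := by nlinarith [dist_nonneg (x := q) (y := p)]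
    have := le_antisymm this dist_nonneg
    exact dist_eq_zero.mp this
  · -- convergence of any proximal iteration sequence
    intro y hyA _ hystep
    have hrec : ∀ n, dist (y n) p ≤ k ^ n * dist (y 0) p := by
      intro n
      induction n with
      | zero => simp
      | succ n ih =>
        calc dist (y (n+1)) p ≤ k * dist (y n) p :=
              hcontr _ (hyA n) _ hpA _ (hyA (n+1)) _ hpA (hystep n) hbest
          _ ≤ k * (k ^ n * dist (y 0) p) := mul_le_mul_of_nonneg_left ih hk0
          _ = k ^ (n+1) * dist (y 0) p := by ring
    rw [tendsto_iff_dist_tendsto_zero]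
    have hub : Tendsto (fun n => k ^ n * dist (y 0) p) atTop (𝓝 (0 * dist (y 0) p)) :=
      (tendsto_pow_atTop_nhds_zero_of_lt_one hk0 hk1).mul_const _
    rw [zero_mul] at hub
    exact tendsto_of_tendsto_of_tendsto_of_le_of_le tendsto_const_nhds hub
      (fun n => dist_nonneg) hrec
end
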